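/- Let G be a graph and G' the graph obtained from G by the diameter-reduction construction (subdividing each edge once and adding an apex t joined to all original vertices, plus a triangle at t with new vertices t₁, t₂). Then G' has diameter at most 4. -/
import Mathlib


/-- Auxiliary relation for the graph `G'`: each edge `{a,b}` of `G` is subdivided
once by a new vertex, and three new mutually adjacent vertices `t = 0`, `t₁ = 1`,
`t₂ = 2` are added, with `t` moreover adjacent to every original vertex of `G`. -/
def GprimeRel {α : Type} (G : SimpleGraph α) :
    (α ⊕ ({e : Sym2 α // e ∈ G.edgeSet} ⊕ Fin 3)) →
    (α ⊕ ({e : Sym2 α // e ∈ G.edgeSet} ⊕ Fin 3)) → Prop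
  | Sum.inl a, Sum.inr (Sum.inl e) => a ∈ e.val
  | Sum.inl _, Sum.inr (Sum.inr t) => t = 0
  | Sum.inr (Sum.inr _), Sum.inr (Sum.inr _) => True
  | _, _ => False

/-- The graph `G'` obtained from `G` by the diameter-reduction construction. -/
def Gprime {α : Type} (G : SimpleGraph α) :
    SimpleGraph (α ⊕ ({e : Sym2 α // e ∈ G.edgeSet} ⊕ Fin 3)) :=
  SimpleGraph.fromRel (GprimeRel G)

/-- `v` lies on a 3-cycle of the graph `H`. -/
def InTriangle {V : Type*} (H : SimpleGraph V) (v : V) : Prop :=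
  ∃ u w, H.Adj v u ∧ H.Adj v w ∧ H.Adj u w

private lemma adj_t0 {α : Type} (G : SimpleGraph α) (a : α) :
    (Gprime G).Adj (Sum.inl a) (Sum.inr (Sum.inr 0)) := by
  constructor
  · simp
  · exact Or.inl rfl

private lemma adj_edge {α : Type} (G : SimpleGraph α)
    (e : {e : Sym2 α // e ∈ G.edgeSet}) {a : α} (h : a ∈ e.val) :
    (Gprime G).Adj (Sum.inl a) (Sum.inr (Sum.inl e)) := by
  constructor
  · simp
  · exact Or.inl h

private lemma adj_tt {α : Type} (G : SimpleGraph α) {i j : Fin 3} (h : i ≠ j) :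
    (Gprime G).Adj (Sum.inr (Sum.inr i)) (Sum.inr (Sum.inr j)) := by
  constructor
  · simp [h]
  · exact Or.inl trivial

private lemma walk_to_t0 {α : Type} (G : SimpleGraph α)
    (v : α ⊕ ({e : Sym2 α // e ∈ G.edgeSet} ⊕ Fin 3)) :
    ∃ p : (Gprime G).Walk v (Sum.inr (Sum.inr 0)), p.length ≤ 2 := by
  match v with
  | Sum.inl a =>
      exact ⟨SimpleGraph.Walk.cons (adj_t0 G a) SimpleGraph.Walk.nil, by simp⟩
  | Sum.inr (Sum.inl e) =>
      refine ⟨SimpleGraph.Walk.cons (adj_edge G e (Sym2.out_fst_mem e.val)).symm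
        (SimpleGraph.Walk.cons (adj_t0 G e.val.out.1) SimpleGraph.Walk.nil), by simp⟩
  | Sum.inr (Sum.inr i) =>
      by_cases h : i = 0
      · subst h; exact ⟨SimpleGraph.Walk.nil, by simp⟩
      · exact ⟨SimpleGraph.Walk.cons (adj_tt G h) SimpleGraph.Walk.nil, by simp⟩

/-- The graph `G'` has diameter at most `4`: any two vertices are joined by a walk
of length at most `4`. -/
theorem Gprime_diameter_le_four {α : Type} [Nonempty α] (G : SimpleGraph α) :
    ∀ u v : α ⊕ ({e : Sym2 α // e ∈ G.edgeSet} ⊕ Fin 3),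
      ∃ p : (Gprime G).Walk u v, p.length ≤ 4 := by
  intro u v
  obtain ⟨p, hp⟩ := walk_to_t0 G u
  obtain ⟨q, hq⟩ := walk_to_t0 G v
  refine ⟨p.append q.reverse, ?_⟩
  simp only [SimpleGraph.Walk.length_append, SimpleGraph.Walk.length_reverse]
  omega
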